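/- For k \ge 2, the generating function of the number u(n) of words of length n over \mathbb{Z}_q starting and ending with a letter from J and containing no k consecutive letters from I equals |J|x(1 - |I|x) / (1 - qx + |I|^k |J| x^{k+1}); i.e., (1 - qx + |I|^k|J|x^{k+1}) \sum_{n \ge 0} u(n) x^n = |J|x(1-|I|x) as formal power series. -/

import Mathlib

open PowerSeries

namespace Stmt8Aux

variable {q : ℕ} (I J : Finset (Fin q)) (k : ℕ)

/-- no `k` consecutive letters from `I` -/
def NoRun (w : List (Fin q)) : Prop :=
  ¬ ∃ v : List (Fin q), v.length = k ∧ (∀ a ∈ v, a ∈ I) ∧ v <:+: w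

/-- length of the maximal prefix of letters from `I` -/
def lead (w : List (Fin q)) : ℕ := (w.takeWhile (fun a => decide (a ∈ I))).length

/-- words of length `n` ending (getLast) in `J` with no `I`-run of length `k` -/
def Q (n : ℕ) (w : List (Fin q)) : Prop :=
  w.length = n ∧ (∀ a ∈ w.getLast?, a ∈ J) ∧ NoRun I k w

def Good (n j : ℕ) (w : List (Fin q)) : Prop := Q I J k n w ∧ lead I w = j

variable {I J k}

theorem lead_le_length (w : List (Fin q)) : lead I w ≤ w.length :=
  (List.takeWhile_prefix _).length_le

theorem lead_cons_pos {b : Fin q} {t : List (Fin q)} (hb : b ∈ I) :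
    lead I (b :: t) = lead I t + 1 := by
  simp [lead, List.takeWhile_cons, hb]

theorem lead_cons_neg {b : Fin q} {t : List (Fin q)} (hb : b ∉ I) :
    lead I (b :: t) = 0 := by
  simp [lead, List.takeWhile_cons, hb]

theorem mem_I_of_mem_take {w : List (Fin q)} {i : ℕ} (h : i ≤ lead I w) :
    ∀ a ∈ w.take i, a ∈ I := by
  induction w generalizing i with
  | nil => simp
  | cons b t ih =>
    cases i with
    | zero => simp
    | succ i =>
      by_cases hb : b ∈ I
      · have hlead : lead I (b :: t) = lead I t + 1 := lead_cons_pos hb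
        intro a ha
        rw [List.take_succ_cons] at ha
        rcases List.mem_cons.mp ha with rfl | ha
        · exact hb
        · exact ih (by omega) a ha
      · exfalso
        have : lead I (b :: t) = 0 := lead_cons_neg hb
        omega

theorem le_lead_of_take {w : List (Fin q)} {i : ℕ} (hle : i ≤ w.length)
    (h : ∀ a ∈ w.take i, a ∈ I) : i ≤ lead I w := by
  induction w generalizing i with
  | nil => simp only [List.length_nil, Nat.le_zero] at hle; simp [hle, lead]
  | cons b t ih =>
    cases i with
    | zero => exact Nat.zero_le _
    | succ i =>
      have hb : b ∈ I := h b (by simp [List.take_succ_cons])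
      have ht : ∀ a ∈ t.take i, a ∈ I := fun a ha => h a (by simp [List.take_succ_cons, ha])
      have : i ≤ lead I t := ih (by simpa using hle) ht
      rw [lead_cons_pos hb]
      omega

theorem noRun_cons (a : Fin q) (w : List (Fin q)) :
    NoRun I k (a :: w) ↔
      NoRun I k w ∧ ¬(k ≤ w.length + 1 ∧ ∀ b ∈ (a :: w).take k, b ∈ I) := by
  constructor
  · intro h
    refine ⟨fun ⟨v, hv1, hv2, hv3⟩ => h ⟨v, hv1, hv2, List.infix_cons_iff.mpr (Or.inr hv3)⟩, ?_⟩
    rintro ⟨hk1, hk2⟩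
    refine h ⟨(a :: w).take k, ?_, hk2, (List.take_prefix _ _).isInfix⟩
    simp only [List.length_take, List.length_cons]
    omega
  · rintro ⟨h1, h2⟩ ⟨v, hv1, hv2, hv3⟩
    rcases List.infix_cons_iff.mp hv3 with hpre | hinf
    · have hlen : k ≤ w.length + 1 := by
        have := hpre.length_le
        simp only [List.length_cons] at this
        omega
      refine h2 ⟨hlen, ?_⟩
      have hveq : v = (a :: w).take k := by
        rw [List.prefix_iff_eq_take] at hpre
        rw [← hv1]; exact hpre
      intro b hb
      exact hv2 b (by rwa [hveq])
    · exact h1 ⟨v, hv1, hv2, hinf⟩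

theorem lead_lt_of_noRun {w : List (Fin q)} (h : NoRun I k w) : lead I w < k := by
  by_contra hle
  push_neg at hle
  have hlen : k ≤ w.length := le_trans hle (lead_le_length w)
  refine h ⟨w.take k, ?_, mem_I_of_mem_take hle, (List.take_prefix _ _).isInfix⟩
  simp only [List.length_take]; omega

theorem mem_J_iff (hd : Disjoint I J) (hun : I ∪ J = Finset.univ) (a : Fin q) :
    a ∈ J ↔ a ∉ I := by
  constructor
  · intro h hI
    exact Finset.disjoint_left.mp hd hI h
  · intro h
    have : a ∈ I ∪ J := hun ▸ Finset.mem_univ a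
    rcases Finset.mem_union.mp this with h' | h'
    · exact absurd h' h
    · exact h'

theorem getLast?_cons_of_ne_nil {a : Fin q} {w : List (Fin q)} (h : w ≠ []) :
    (a :: w).getLast? = w.getLast? := by
  cases w with
  | nil => exact absurd rfl h
  | cons b t => exact List.getLast?_cons_cons

theorem good_zero_cons (hd : Disjoint I J) (hun : I ∪ J = Finset.univ) (hk : 1 ≤ k)
    {n : ℕ} (hn : 1 ≤ n) (a : Fin q) (w : List (Fin q)) :
    Good I J k (n + 1) 0 (a :: w) ↔ a ∈ J ∧ Q I J k n w := by
  have hwne : w.length = n → w ≠ [] := by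
    intro h hnil; rw [hnil] at h; simp at h; omega
  constructor
  · rintro ⟨⟨hlen, hlast, hrun⟩, hlead⟩
    simp only [List.length_cons, Nat.add_right_cancel_iff] at hlen
    have haI : a ∉ I := fun haI => by
      have := lead_cons_pos (t := w) haI; omega
    refine ⟨(mem_J_iff hd hun a).mpr haI, hlen, ?_, ((noRun_cons a w).mp hrun).1⟩
    rwa [getLast?_cons_of_ne_nil (hwne hlen)] at hlast
  · rintro ⟨haJ, hlen, hlast, hrun⟩
    have haI : a ∉ I := (mem_J_iff hd hun a).mp haJ
    refine ⟨⟨by simp [hlen], ?_, ?_⟩, lead_cons_neg haI⟩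
    · rwa [getLast?_cons_of_ne_nil (hwne hlen)]
    · refine (noRun_cons a w).mpr ⟨hrun, ?_⟩
      rintro ⟨hk1, hk2⟩
      refine haI (hk2 a ?_)
      obtain ⟨k', rfl⟩ := Nat.exists_eq_add_of_le hk
      rw [Nat.add_comm 1 k', List.take_succ_cons]
      exact List.mem_cons_self

theorem good_succ_cons (hd : Disjoint I J) (hun : I ∪ J = Finset.univ)
    {n j : ℕ} (hn : 1 ≤ n) (hj : j + 1 < k) (a : Fin q) (w : List (Fin q)) :
    Good I J k (n + 1) (j + 1) (a :: w) ↔ a ∈ I ∧ Good I J k n j w := by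
  have hwne : w.length = n → w ≠ [] := by
    intro h hnil; rw [hnil] at h; simp at h; omega
  constructor
  · rintro ⟨⟨hlen, hlast, hrun⟩, hlead⟩
    simp only [List.length_cons, Nat.add_right_cancel_iff] at hlen
    have haI : a ∈ I := by
      by_contra haI
      rw [lead_cons_neg haI] at hlead
      omega
    rw [lead_cons_pos haI] at hlead
    refine ⟨haI, ⟨hlen, ?_, ((noRun_cons a w).mp hrun).1⟩, by omega⟩
    rwa [getLast?_cons_of_ne_nil (hwne hlen)] at hlast
  · rintro ⟨haI, ⟨hlen, hlast, hrun⟩, hlead⟩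
    refine ⟨⟨by simp [hlen], ?_, ?_⟩, by rw [lead_cons_pos haI, hlead]⟩
    · rwa [getLast?_cons_of_ne_nil (hwne hlen)]
    · refine (noRun_cons a w).mpr ⟨hrun, ?_⟩
      rintro ⟨hk1, hk2⟩
      obtain ⟨k', rfl⟩ := Nat.exists_eq_add_of_le (show 1 ≤ k by omega)
      rw [Nat.add_comm 1 k', List.take_succ_cons] at hk2
      have hall : ∀ b ∈ w.take k', b ∈ I := fun b hb => hk2 b (List.mem_cons_of_mem a hb)
      have : k' ≤ lead I w := le_lead_of_take (by omega) hall
      omega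

theorem good_isEmpty (hd : Disjoint I J) {m j : ℕ} (hm : 1 ≤ m) (hjm : m ≤ j) :
    IsEmpty {w : List (Fin q) // Good I J k m j w} := by
  constructor
  rintro ⟨w, ⟨hlen, hlast, hrun⟩, hlead⟩
  have h1 : lead I w ≤ w.length := lead_le_length w
  have h2 : lead I w = w.length := by omega
  have hwne : w ≠ [] := by intro hnil; rw [hnil] at hlen; simp at hlen; omega
  have hall : ∀ a ∈ w, a ∈ I := by
    intro a ha
    exact mem_I_of_mem_take (le_of_eq h2.symm) a (by rwa [List.take_length])
  have hlst := List.getLast?_eq_getLast hwne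
  have hJ : w.getLast hwne ∈ J := hlast _ (by rw [hlst]; rfl)
  have hI : w.getLast hwne ∈ I := hall _ (List.getLast_mem hwne)
  exact Finset.disjoint_left.mp hd hI hJ

theorem good_one_iff (hd : Disjoint I J) (hun : I ∪ J = Finset.univ) (hk : 2 ≤ k)
    (w : List (Fin q)) :
    Good I J k 1 0 w ↔ ∃ a ∈ J, w = [a] := by
  constructor
  · rintro ⟨⟨hlen, hlast, _⟩, _⟩
    obtain ⟨a, rfl⟩ := List.length_eq_one_iff.mp hlen
    exact ⟨a, hlast a rfl, rfl⟩
  · rintro ⟨a, haJ, rfl⟩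
    have haI : a ∉ I := (mem_J_iff hd hun a).mp haJ
    refine ⟨⟨rfl, by simpa using haJ, ?_⟩, lead_cons_neg haI⟩
    rintro ⟨v, hv1, _, hv3⟩
    have := hv3.length_le
    simp at this
    omega

instance finite_good (n j : ℕ) : Finite {w : List (Fin q) // Good I J k n j w} :=
  Set.Finite.to_subtype
    ((List.finite_length_eq (Fin q) n).subset (fun w hw => hw.1.1))

instance finite_Q (n : ℕ) : Finite {w : List (Fin q) // Q I J k n w} :=
  Set.Finite.to_subtype
    ((List.finite_length_eq (Fin q) n).subset (fun w hw => hw.1))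

variable (I J k) in
noncomputable def cnt (n j : ℕ) : ℕ := Nat.card {w : List (Fin q) // Good I J k n j w}

theorem card_sigma' {ι : Type*} [Fintype ι] (f : ι → Type*) [∀ i, Finite (f i)] :
    Nat.card (Σ i, f i) = ∑ i, Nat.card (f i) := by
  letI := fun i => Fintype.ofFinite (f i)
  simp [Nat.card_eq_fintype_card]

theorem cnt_one (hd : Disjoint I J) (hun : I ∪ J = Finset.univ) (hk : 2 ≤ k) :
    cnt I J k 1 0 = J.card := by
  rw [cnt, ← Nat.card_eq_finsetCard]
  apply Nat.card_congr
  apply Equiv.symm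
  apply Equiv.ofBijective (f := fun (a : {a // a ∈ J}) =>
    (⟨[a.1], (good_one_iff hd hun hk _).mpr ⟨a.1, a.2, rfl⟩⟩ :
      {w : List (Fin q) // Good I J k 1 0 w}))
  constructor
  · rintro ⟨a, _⟩ ⟨b, _⟩ h
    simp only [Subtype.mk.injEq, List.cons.injEq, and_true] at h
    exact Subtype.ext h
  · rintro ⟨w, hw⟩
    obtain ⟨a, haJ, rfl⟩ := (good_one_iff hd hun hk w).mp hw
    exact ⟨⟨a, haJ⟩, rfl⟩

theorem cnt_eq_zero (hd : Disjoint I J) {m j : ℕ} (hm : 1 ≤ m) (hjm : m ≤ j) :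
    cnt I J k m j = 0 := by
  have := good_isEmpty (k := k) hd hm hjm
  exact Nat.card_of_isEmpty

theorem card_Q (hd : Disjoint I J) (hk : 2 ≤ k) (n : ℕ) :
    Nat.card {w : List (Fin q) // Q I J k n w} = ∑ j ∈ Finset.range k, cnt I J k n j := by
  have e : (Σ j : Fin k, {w : List (Fin q) // Good I J k n j w}) ≃
      {w : List (Fin q) // Q I J k n w} := by
    apply Equiv.ofBijective (f := fun p => ⟨p.2.1, p.2.2.1⟩)
    constructor
    · rintro ⟨⟨j, hj⟩, ⟨w, hw⟩⟩ ⟨⟨j', hj'⟩, ⟨w', hw'⟩⟩ h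
      simp only [Subtype.mk.injEq] at h
      subst h
      have : j = j' := hw.2.symm.trans hw'.2
      subst this
      rfl
    · rintro ⟨w, hw⟩
      exact ⟨⟨⟨lead I w, lead_lt_of_noRun hw.2.2⟩, ⟨w, hw, rfl⟩⟩, rfl⟩
  rw [← Nat.card_congr e, card_sigma']
  exact Fin.sum_univ_eq_sum_range (fun j => cnt I J k n j) k

theorem cnt_succ_zero (hd : Disjoint I J) (hun : I ∪ J = Finset.univ) (hk : 2 ≤ k)
    {n : ℕ} (hn : 1 ≤ n) :
    cnt I J k (n + 1) 0 = J.card * ∑ j ∈ Finset.range k, cnt I J k n j := by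
  rw [← card_Q hd hk, ← Nat.card_eq_finsetCard, ← Nat.card_prod]
  rw [cnt]
  apply Nat.card_congr
  apply Equiv.symm
  apply Equiv.ofBijective (f := fun (p : {a // a ∈ J} × {w : List (Fin q) // Q I J k n w}) =>
    (⟨p.1.1 :: p.2.1, (good_zero_cons hd hun (by omega) hn _ _).mpr ⟨p.1.2, p.2.2⟩⟩ :
      {w : List (Fin q) // Good I J k (n + 1) 0 w}))
  constructor
  · rintro ⟨⟨a, _⟩, ⟨w, _⟩⟩ ⟨⟨b, _⟩, ⟨w', _⟩⟩ h
    simp only [Subtype.mk.injEq, List.cons.injEq] at h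
    obtain ⟨h1, h2⟩ := h
    subst h1; subst h2
    rfl
  · rintro ⟨w, hw⟩
    cases w with
    | nil => exact absurd hw.1.1 (by simp)
    | cons b t =>
      obtain ⟨hb, ht⟩ := (good_zero_cons hd hun (by omega) hn b t).mp hw
      exact ⟨⟨⟨b, hb⟩, ⟨t, ht⟩⟩, rfl⟩

theorem cnt_succ_succ (hd : Disjoint I J) (hun : I ∪ J = Finset.univ)
    {n j : ℕ} (hn : 1 ≤ n) (hj : j + 1 < k) :
    cnt I J k (n + 1) (j + 1) = I.card * cnt I J k n j := by
  rw [cnt, cnt, ← Nat.card_eq_finsetCard, ← Nat.card_prod]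
  apply Nat.card_congr
  apply Equiv.symm
  apply Equiv.ofBijective
    (f := fun (p : {a // a ∈ I} × {w : List (Fin q) // Good I J k n j w}) =>
    (⟨p.1.1 :: p.2.1, (good_succ_cons hd hun hn hj _ _).mpr ⟨p.1.2, p.2.2⟩⟩ :
      {w : List (Fin q) // Good I J k (n + 1) (j + 1) w}))
  constructor
  · rintro ⟨⟨a, _⟩, ⟨w, _⟩⟩ ⟨⟨b, _⟩, ⟨w', _⟩⟩ h
    simp only [Subtype.mk.injEq, List.cons.injEq] at h
    obtain ⟨h1, h2⟩ := h
    subst h1; subst h2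
    rfl
  · rintro ⟨w, hw⟩
    cases w with
    | nil => exact absurd hw.1.1 (by simp)
    | cons b t =>
      obtain ⟨hb, ht⟩ := (good_succ_cons hd hun hn hj b t).mp hw
      exact ⟨⟨⟨b, hb⟩, ⟨t, ht⟩⟩, rfl⟩

theorem cnt_run (hd : Disjoint I J) (hun : I ∪ J = Finset.univ)
    {j : ℕ} (hj : j < k) {n : ℕ} (hn : 1 ≤ n) :
    cnt I J k (n + j) j = I.card ^ j * cnt I J k n 0 := by
  induction j with
  | zero => simp
  | succ j ih =>
    have : cnt I J k (n + j + 1) (j + 1) = I.card * cnt I J k (n + j) j :=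
      cnt_succ_succ hd hun (by omega) hj
    rw [show n + (j+1) = n + j + 1 by omega, this, ih (by omega)]
    ring

theorem noRun_reverse_of {w : List (Fin q)} (h : NoRun I k w) : NoRun I k w.reverse := by
  rintro ⟨v, hv1, hv2, hv3⟩
  refine h ⟨v.reverse, by simp [hv1], fun a ha => hv2 a (by simpa using ha), ?_⟩
  have h4 := List.reverse_infix (l₁ := v.reverse) (l₂ := w)
  rw [List.reverse_reverse] at h4
  exact h4.mp hv3

theorem noRun_reverse (w : List (Fin q)) : NoRun I k w.reverse ↔ NoRun I k w :=
  ⟨fun h => by simpa using noRun_reverse_of h, noRun_reverse_of⟩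

theorem orig_iff_good (hd : Disjoint I J) (hun : I ∪ J = Finset.univ)
    {m : ℕ} (hm : 1 ≤ m) (d : Fin q) (w : List (Fin q)) :
    (w.length = m ∧ w.getD 0 d ∈ J ∧ w.getD (m - 1) d ∈ J ∧ NoRun I k w) ↔
      Good I J k m 0 w.reverse := by
  cases w with
  | nil =>
    constructor
    · rintro ⟨h, -⟩; simp at h; omega
    · rintro ⟨⟨h, -⟩, -⟩; simp at h; omega
  | cons x t =>
    set w := x :: t with hw
    have hwne : w ≠ [] := by simp [hw]
    have hhead : (∀ a ∈ w.reverse.getLast?, a ∈ J) ↔ w.getD 0 d ∈ J := by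
      rw [List.getLast?_reverse]
      simp [hw]
    constructor
    · rintro ⟨hlen, hfirst, hlast, hrun⟩
      refine ⟨⟨by simp [hlen], hhead.mpr hfirst, (noRun_reverse w).mpr hrun⟩, ?_⟩
      -- lead of reverse is zero
      cases hr : w.reverse with
      | nil => exact absurd (by simpa using congrArg List.length hr) hwne
      | cons y s =>
        have hy : w.getLast? = some y := by
          rw [← List.head?_reverse, hr]; rfl
        have hgetD : w.getD (m - 1) d = y := by
          rw [List.getD_eq_getElem?_getD,
            show m - 1 = w.length - 1 from by rw [hlen],
            ← List.getLast?_eq_getElem?, hy]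
          rfl
        have hyJ : y ∈ J := hgetD ▸ hlast
        exact lead_cons_neg ((mem_J_iff hd hun y).mp hyJ)
    · rintro ⟨⟨hlen, hfirst, hrun⟩, hlead⟩
      rw [List.length_reverse] at hlen
      refine ⟨hlen, hhead.mp hfirst, ?_, (noRun_reverse w).mp hrun⟩
      cases hr : w.reverse with
      | nil => exact absurd (by simpa using congrArg List.length hr) hwne
      | cons y s =>
        have hy : w.getLast? = some y := by
          rw [← List.head?_reverse, hr]; rfl
        have hgetD : w.getD (m - 1) d = y := by
          rw [List.getD_eq_getElem?_getD,
            show m - 1 = w.length - 1 from by rw [hlen],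
            ← List.getLast?_eq_getElem?, hy]
          rfl
        rw [hr] at hlead
        have hyI : y ∉ I := by
          intro hyI
          rw [lead_cons_pos hyI] at hlead
          omega
        rw [hgetD]
        exact (mem_J_iff hd hun y).mpr hyI

def revEquiv : List (Fin q) ≃ List (Fin q) :=
  ⟨List.reverse, List.reverse, List.reverse_reverse, List.reverse_reverse⟩

end Stmt8Aux

open Stmt8Aux

/-- For `k ≥ 2`, the generating function of the numbers `u n` of words of
length `n` over `ℤ_q` starting and ending with a letter from `J` and containing no `k`
consecutive letters from `I` satisfies
`(1 - qx + |I|^k|J|x^{k+1}) · ∑_{n ≥ 0} u n x^n = |J|x(1 - |I|x)`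
as formal power series. -/
theorem stmt8 (q k : ℕ) (hq : 2 ≤ q) (hk : 2 ≤ k)
    (I J : Finset (Fin q)) (hI : I.Nonempty) (hJ : J.Nonempty)
    (hd : Disjoint I J) (hun : I ∪ J = Finset.univ)
    (u : ℕ → ℕ) (h0 : u 0 = 0)
    (hcard : ∀ m : ℕ, 1 ≤ m → u m = Nat.card {w : List (Fin q) //
      w.length = m ∧ w.getD 0 ⟨0, by omega⟩ ∈ J ∧ w.getD (m - 1) ⟨0, by omega⟩ ∈ J ∧
      ¬ ∃ v : List (Fin q), v.length = k ∧ (∀ a ∈ v, a ∈ I) ∧ v <:+: w}) :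
    (1 - C (q : ℤ) * X + C ((I.card : ℤ) ^ k * J.card) * X ^ (k + 1)) *
        PowerSeries.mk (fun n => (u n : ℤ)) =
      C (J.card : ℤ) * X * (1 - C (I.card : ℤ) * X) := by
  -- Step 1: identify u with cnt
  have hu : ∀ m, 1 ≤ m → u m = cnt I J k m 0 := by
    intro m hm
    rw [hcard m hm, cnt]
    exact Nat.card_congr (Equiv.subtypeEquiv revEquiv
      (fun w => orig_iff_good hd hun hm _ w))
  have hu1 : u 1 = J.card := by
    rw [hu 1 le_rfl, cnt_one hd hun hk]
  have hqIJ : I.card + J.card = q := by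
    have h1 := Finset.card_union_of_disjoint hd
    rw [hun] at h1
    have h2 : (Finset.univ : Finset (Fin q)).card = q := by simp
    omega
  -- Step 2: the basic recurrence
  have hrec : ∀ n, 2 ≤ n →
      u n = ∑ j ∈ Finset.range k, I.card ^ j * J.card * u (n - 1 - j) := by
    intro n hn
    obtain ⟨m, rfl⟩ : ∃ m, n = m + 2 := ⟨n - 2, by omega⟩
    rw [hu _ (by omega), show m + 2 = (m + 1) + 1 from rfl,
      cnt_succ_zero hd hun hk (by omega), Finset.mul_sum]
    apply Finset.sum_congr rfl
    intro j hj
    have hjk : j < k := Finset.mem_range.mp hj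
    by_cases hcase : j ≤ m
    · have hrun := cnt_run hd hun hjk (n := m + 1 - j) (by omega)
      rw [show m + 1 - j + j = m + 1 from by omega] at hrun
      rw [hrun, ← hu (m + 1 - j) (by omega),
        show m + 1 + 1 - 1 - j = m + 1 - j from by omega]
      ring
    · rw [cnt_eq_zero hd (by omega) (by omega),
        show m + 1 + 1 - 1 - j = 0 from by omega, h0]
      ring
  have hq'z : (I.card : ℤ) + J.card = q := by exact_mod_cast hqIJ
  -- Step 3: telescoped recurrence (in ℤ)
  have h3 : ∀ n, 3 ≤ n →
      (u n : ℤ) + (I.card : ℤ) ^ k * J.card * u (n - 1 - k) = q * u (n - 1) := by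
    intro n hn
    obtain ⟨l, rfl⟩ : ∃ l, k = l + 1 := ⟨k - 1, by omega⟩
    have hA := hrec n (by omega)
    have hB := hrec (n - 1) (by omega)
    rw [Finset.sum_range_succ'] at hA
    rw [Finset.sum_range_succ] at hB
    have hA' : (u n : ℤ) = I.card * (∑ j ∈ Finset.range l,
        (I.card : ℤ) ^ j * J.card * u (n - 2 - j)) + J.card * u (n - 1) := by
      have hstep : ∑ j ∈ Finset.range l, (I.card : ℤ) ^ (j + 1) * J.card * u (n - 2 - j)
          = I.card * ∑ j ∈ Finset.range l, (I.card : ℤ) ^ j * J.card * u (n - 2 - j) := by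
        rw [Finset.mul_sum]
        exact Finset.sum_congr rfl fun j _ => by ring
      rw [hA]
      push_cast
      simp only [show ∀ j, n - 1 - (j + 1) = n - 2 - j from fun j => by omega,
        show n - 1 - 0 = n - 1 from by omega]
      rw [hstep]
      ring
    have hB' : (u (n - 1) : ℤ) = (∑ j ∈ Finset.range l,
        (I.card : ℤ) ^ j * J.card * u (n - 2 - j))
          + (I.card : ℤ) ^ l * J.card * u (n - 2 - l) := by
      rw [hB]
      push_cast
      simp only [show ∀ j, n - 1 - 1 - j = n - 2 - j from fun j => by omega]
    rw [show n - 1 - (l + 1) = n - 2 - l from by omega]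
    linear_combination hA' - (I.card : ℤ) * hB' + (u (n - 1) : ℤ) * hq'z
  -- Step 4: value of u 2
  have hsum2 : ∑ j ∈ Finset.range k, I.card ^ j * J.card * u (2 - 1 - j)
      = J.card * u 1 := by
    rw [Finset.sum_eq_single_of_mem 0 (Finset.mem_range.mpr (by omega))
      (fun b _ hb => by rw [show 2 - 1 - b = 0 from by omega, h0, Nat.mul_zero])]
    norm_num
  have hu2 : (u 2 : ℤ) = J.card * u 1 := by
    rw [hrec 2 le_rfl, hsum2]; push_cast; ring
  have hu1z : (u 1 : ℤ) = J.card := by exact_mod_cast hu1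
  -- Step 5: power series identity
  have hCm : C ((J.card : ℤ) * I.card) = C (J.card : ℤ) * C (I.card : ℤ) :=
    map_mul _ _ _
  have lhs_eq : (1 - C (q : ℤ) * X + C ((I.card : ℤ) ^ k * J.card) * X ^ (k + 1)) *
        PowerSeries.mk (fun n => (u n : ℤ))
      = PowerSeries.mk (fun n => (u n : ℤ))
        - C (q : ℤ) * (PowerSeries.mk (fun n => (u n : ℤ)) * X ^ 1)
        + C ((I.card : ℤ) ^ k * J.card) *
            (PowerSeries.mk (fun n => (u n : ℤ)) * X ^ (k + 1)) := by
    ring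
  have rhs_eq : C (J.card : ℤ) * X * (1 - C (I.card : ℤ) * X)
      = C (J.card : ℤ) * X ^ 1 - C ((J.card : ℤ) * I.card) * X ^ 2 := by
    rw [hCm]; ring
  rw [lhs_eq, rhs_eq]
  ext n
  simp only [map_sub, map_add, coeff_C_mul, PowerSeries.coeff_mul_X_pow',
    PowerSeries.coeff_X_pow, PowerSeries.coeff_C, coeff_mk]
  rcases Nat.lt_or_ge n 3 with hn3 | hn3
  · interval_cases n
    · norm_num [h0]
    · rw [if_neg (show ¬ k + 1 ≤ 1 by omega)]
      norm_num [h0, hu1]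
    · rw [if_neg (show ¬ k + 1 ≤ 2 by omega)]
      norm_num
      linear_combination hu2 - (I.card : ℤ) * hu1z + (u 1 : ℤ) * hq'z
  · obtain ⟨m, rfl⟩ : ∃ m, n = m + 3 := ⟨n - 3, by omega⟩
    have hmain := h3 (m + 3) (by omega)
    rw [show m + 3 - 1 - k = m + 2 - k from by omega,
      show m + 3 - 1 = m + 2 from by omega] at hmain
    simp only [if_pos (show (1 : ℕ) ≤ m + 3 by omega),
      if_pos (show (2 : ℕ) ≤ m + 3 by omega),
      show m + 3 - 1 = m + 2 from by omega,
      show m + 3 - 2 = m + 1 from by omega,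
      if_neg (show ¬ (m + 2 = 0) by omega), if_neg (show ¬ (m + 1 = 0) by omega)]
    by_cases hkn : k + 1 ≤ m + 3
    · simp only [if_pos hkn, show m + 3 - (k + 1) = m + 2 - k from by omega]
      linear_combination hmain
    · simp only [if_neg hkn]
      have hz : m + 2 - k = 0 := by omega
      rw [hz, h0] at hmain
      push_cast at hmain
      linear_combination hmain
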